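/- In Cl(15,0), the 8-form Φ_O' obtained by multiplying each term of Φ_O = e_{12389AB} + ... + e_{3568BDE} by the pseudoscalar satisfies (3·e_{123456789ABCDEF} - Φ_O)² = -16. -/

import Mathlib

noncomputable def Q15 : QuadraticForm ℝ (Fin 15 → ℝ) :=
  QuadraticMap.weightedSumSquares ℝ (fun _ : Fin 15 => (1 : ℝ))

noncomputable def e15 (i : Fin 15) : CliffordAlgebra Q15 :=
  CliffordAlgebra.ι Q15 (Pi.single i 1)

/-- Product of generators with the given (0-based) indices;
hexadecimal index k of the paper corresponds to k-1 here. -/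
noncomputable def p15 (l : List (Fin 15)) : CliffordAlgebra Q15 := (l.map e15).prod

/-- Φ_A = e1234567. -/
noncomputable def ΦA : CliffordAlgebra Q15 := p15 [0,1,2,3,4,5,6]

/-- Φ_O = e_{12389AB} + e_{14589CD} + e_{16789EF} + e_{2468ACE} + e_{2578ADF}
  + e_{3478BCF} + e_{3568BDE}. -/
noncomputable def ΦO : CliffordAlgebra Q15 :=
  p15 [0,1,2,7,8,9,10] + p15 [0,3,4,7,8,11,12] + p15 [0,5,6,7,8,13,14]
    + p15 [1,3,5,7,9,11,13] + p15 [1,4,6,7,9,12,14] + p15 [2,3,6,7,10,11,14]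
    + p15 [2,4,5,7,10,12,13]

/-- Φ_P = e_{123CDEF} + e_{145ABEF} + e_{167ABCD} + e_{2469BDF} + e_{2579BCE}
  + e_{3479ADE} + e_{3569ACF}. -/
noncomputable def ΦP : CliffordAlgebra Q15 :=
  p15 [0,1,2,11,12,13,14] + p15 [0,3,4,9,10,13,14] + p15 [0,5,6,9,10,11,12]
    + p15 [1,3,5,8,10,12,14] + p15 [1,4,6,8,10,11,13] + p15 [2,3,6,8,9,12,13]
    + p15 [2,4,5,8,9,11,14]

/-- The pseudoscalar e_{123456789ABCDEF}. -/
noncomputable def ω15 : CliffordAlgebra Q15 :=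
  p15 [0,1,2,3,4,5,6,7,8,9,10,11,12,13,14]


lemma e_sq (i : Fin 15) : e15 i * e15 i = 1 := by
  rw [e15, CliffordAlgebra.ι_sq_scalar]
  simp [Q15, QuadraticMap.weightedSumSquares_apply, Pi.single_apply, Finset.sum_ite_eq']
  exact (algebraMap ℝ (CliffordAlgebra Q15)).map_one

lemma e_anti {i j : Fin 15} (h : i ≠ j) : e15 i * e15 j = -(e15 j * e15 i) := by
  have key := CliffordAlgebra.ι_mul_ι_add_swap (Q := Q15) (Pi.single i (1:ℝ)) (Pi.single j 1)
  have hB : QuadraticMap.polar Q15 (Pi.single i (1:ℝ)) (Pi.single j 1) = 0 := by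
    unfold QuadraticMap.polar
    simp only [Q15, QuadraticMap.weightedSumSquares_apply, ← Finset.sum_sub_distrib]
    apply Finset.sum_eq_zero
    intro x _
    rcases eq_or_ne x i with rfl|hi <;> rcases eq_or_ne x j with rfl|hj <;>
      simp_all [Pi.single_apply]
  rw [hB, map_zero] at key
  rw [e15, e15]
  linear_combination (norm := noncomm_ring) key

@[simp] lemma e_cancel (i : Fin 15) (x : CliffordAlgebra Q15) :
    e15 i * (e15 i * x) = x := by
  rw [← mul_assoc, e_sq, one_mul]

@[simp] lemma e_swap {i j : Fin 15} (h : j < i) :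
    e15 i * e15 j = -(e15 j * e15 i) := e_anti h.ne'

@[simp] lemma e_swap' {i j : Fin 15} (h : j < i) (x : CliffordAlgebra Q15) :
    e15 i * (e15 j * x) = -(e15 j * (e15 i * x)) := by
  rw [← mul_assoc, e_anti h.ne', neg_mul, mul_assoc]

@[simp] lemma e_num (i : Fin 15) (x : CliffordAlgebra Q15) :
    e15 i * (3 * x) = 3 * (e15 i * x) := by
  rw [← mul_assoc, ← mul_assoc, (Commute.ofNat_right (e15 i) 3).eq]

set_option maxRecDepth 100000 in
set_option maxHeartbeats 4000000 in
theorem stmt17 : (3 * ω15 - ΦO) ^ 2 = -16 := by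
  rw [pow_two, mul_sub, sub_mul, sub_mul]
  simp (config := { decide := true }) [ΦO, ω15, p15, mul_add, add_mul, mul_sub, sub_mul,
    mul_assoc, mul_neg, neg_mul, e_sq]
  generalize ((e15 3 * (e15 4 * (e15 5 * (e15 6 * (e15 11 * (e15 12 * (e15 13 * (e15 14)))))))) : CliffordAlgebra Q15) = a0
  generalize ((e15 1 * (e15 2 * (e15 5 * (e15 6 * (e15 9 * (e15 10 * (e15 13 * (e15 14)))))))) : CliffordAlgebra Q15) = a1
  generalize ((e15 1 * (e15 2 * (e15 3 * (e15 4 * (e15 9 * (e15 10 * (e15 11 * (e15 12)))))))) : CliffordAlgebra Q15) = a2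
  generalize ((e15 0 * (e15 2 * (e15 4 * (e15 6 * (e15 8 * (e15 10 * (e15 12 * (e15 14)))))))) : CliffordAlgebra Q15) = a3
  generalize ((e15 0 * (e15 2 * (e15 3 * (e15 5 * (e15 8 * (e15 10 * (e15 11 * (e15 13)))))))) : CliffordAlgebra Q15) = a4
  generalize ((e15 0 * (e15 1 * (e15 4 * (e15 5 * (e15 8 * (e15 9 * (e15 12 * (e15 13)))))))) : CliffordAlgebra Q15) = a5
  generalize ((e15 0 * (e15 1 * (e15 3 * (e15 6 * (e15 8 * (e15 9 * (e15 11 * (e15 14)))))))) : CliffordAlgebra Q15) = a6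
  noncomm_ring
  norm_num [zsmul_eq_mul]
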